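/- arXiv:1004.0951 — 2 statements merged into one kernel-verified Lean document; each statement's English description precedes it below -/
import Mathlib

section
/- Conversely, if A_1,...,A_n and A'_1,...,A'_n are sets of m×m complex matrices such that each set is linearly independent and Σ_j A'_j ρ A'_j† = Σ_i A_i ρ A_i† for all m×m matrices ρ, then there exists an n×n unitary matrix u with A'_j = Σ_i u_{ji} A_i. -/
open Matrix Finset

lemma mem_span_of_sum_outer {ι : Type*} [Fintype ι] {n : ℕ} (w w' : Fin n → (ι → ℂ))
    (key : ∀ p q : ι, ∑ j, w' j p * (starRingEnd ℂ) (w' j q)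
      = ∑ i, w i p * (starRingEnd ℂ) (w i q))
    (j : Fin n) : w' j ∈ Submodule.span ℂ (Set.range w) := by
  classical
  let W : Fin n → EuclideanSpace ℂ ι := fun i => WithLp.toLp 2 (w i)
  let W' : Fin n → EuclideanSpace ℂ ι := fun i => WithLp.toLp 2 (w' i)
  have hmem : W' j ∈ (Submodule.span ℂ (Set.range W))ᗮᗮ := by
    rw [Submodule.mem_orthogonal]
    intro x hx
    have hinner : ∀ (y : Fin n → EuclideanSpace ℂ ι) (k : Fin n),
        (inner ℂ (y k) x : ℂ) = ∑ p, (starRingEnd ℂ) (y k p) * x p := by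
      intro y k
      simp [PiLp.inner_apply, RCLike.inner_apply, mul_comm]
    have hz : ∀ i, (∑ p, (starRingEnd ℂ) (w i p) * x p) = 0 := by
      intro i
      have h0 := (Submodule.mem_orthogonal _ _).1 hx _ (Submodule.subset_span ⟨i, rfl⟩)
      rw [hinner W i] at h0
      exact h0
    have expand : ∀ y : Fin n → (ι → ℂ),
        ∑ k, (∑ p, (starRingEnd ℂ) (y k p) * x p) * (∑ q, y k q * (starRingEnd ℂ) (x q))
          = ∑ p, ∑ q, x p * (starRingEnd ℂ) (x q) * ∑ k, y k q * (starRingEnd ℂ) (y k p) := by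
      intro y
      simp only [Finset.sum_mul_sum]
      rw [Finset.sum_comm]
      refine Finset.sum_congr rfl fun p _ => ?_
      rw [Finset.sum_comm]
      refine Finset.sum_congr rfl fun q _ => ?_
      rw [Finset.mul_sum]
      exact Finset.sum_congr rfl fun k _ => by ring
    have hS : ∑ k, (∑ p, (starRingEnd ℂ) (w' k p) * x p)
        * (∑ q, w' k q * (starRingEnd ℂ) (x q)) = 0 := by
      rw [expand w']
      have hswap : ∀ p q : ι, (∑ k, w' k q * (starRingEnd ℂ) (w' k p))
          = ∑ i, w i q * (starRingEnd ℂ) (w i p) := fun p q => key q p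
      simp_rw [hswap]
      rw [← expand w]
      exact Finset.sum_eq_zero fun i _ => by rw [hz i, zero_mul]
    have hconj : ∀ (y : Fin n → (ι → ℂ)) (k : Fin n), (∑ q, y k q * (starRingEnd ℂ) (x q))
        = (starRingEnd ℂ) (∑ p, (starRingEnd ℂ) (y k p) * x p) := by
      intro y k
      rw [map_sum]
      exact Finset.sum_congr rfl fun p _ => by simp [_root_.map_mul, mul_comm]
    have hzero : ∀ k, (∑ p, (starRingEnd ℂ) (w' k p) * x p) = 0 := by
      have h2 : ∑ k, Complex.normSq (∑ p, (starRingEnd ℂ) (w' k p) * x p) = 0 := by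
        have h3 : ∑ k, (Complex.normSq (∑ p, (starRingEnd ℂ) (w' k p) * x p) : ℂ) = 0 := by
          have h4 := hS
          simp_rw [hconj w'] at h4
          simp_rw [Complex.mul_conj] at h4
          exact_mod_cast h4
        exact_mod_cast h3
      intro k
      have := (Finset.sum_eq_zero_iff_of_nonneg
        (fun i _ => Complex.normSq_nonneg _)).1 h2 k (Finset.mem_univ k)
      exact Complex.normSq_eq_zero.1 this
    have hfin : (inner ℂ x (W' j) : ℂ)
        = (starRingEnd ℂ) (∑ p, (starRingEnd ℂ) (w' j p) * x p) := by
      rw [map_sum]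
      simp [W', PiLp.inner_apply, RCLike.inner_apply, _root_.map_mul, mul_comm]
    rw [hfin, hzero j, map_zero]
  rw [Submodule.orthogonal_orthogonal] at hmem
  have hmap := Submodule.mem_map_of_mem (f := (WithLp.linearEquiv 2 ℂ (ι → ℂ)).toLinearMap) hmem
  rw [Submodule.map_span, ← Set.range_comp] at hmap
  exact hmap

theorem unitary_freedom_of_same_map {m n : ℕ} (A A' : Fin n → Matrix (Fin m) (Fin m) ℂ)
    (hA : LinearIndependent ℂ A) (hA' : LinearIndependent ℂ A')
    (hmap : ∀ ρ : Matrix (Fin m) (Fin m) ℂ,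
      ∑ j, A' j * ρ * (A' j)ᴴ = ∑ i, A i * ρ * (A i)ᴴ) :
    ∃ u ∈ Matrix.unitaryGroup (Fin n) ℂ, ∀ j, A' j = ∑ i, u j i • A i := by
  classical
  let v : Fin n → (Fin m × Fin m → ℂ) := fun i p => A i p.1 p.2
  let v' : Fin n → (Fin m × Fin m → ℂ) := fun j p => A' j p.1 p.2
  have key : ∀ p q : Fin m × Fin m,
      ∑ j, v' j p * (starRingEnd ℂ) (v' j q) = ∑ i, v i p * (starRingEnd ℂ) (v i q) := by
    intro p q
    have h0 := congrFun (congrFun (hmap (Matrix.single p.2 q.2 (1:ℂ))) p.1) q.1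
    have e : ∀ B : Fin n → Matrix (Fin m) (Fin m) ℂ,
        (∑ j, B j * Matrix.single p.2 q.2 (1:ℂ) * (B j)ᴴ) p.1 q.1
          = ∑ j, B j p.1 p.2 * (starRingEnd ℂ) (B j q.1 q.2) := by
      intro B
      rw [Matrix.sum_apply]
      exact Finset.sum_congr rfl fun j _ => by
        simp [Matrix.mul_apply, Matrix.conjTranspose_apply, Matrix.single, ite_and,
          Finset.sum_ite_eq, Finset.sum_ite_eq']
    rw [e A', e A] at h0
    exact h0
  have hv : LinearIndependent ℂ v := by
    have := hA.map' (LinearEquiv.curry ℂ ℂ (Fin m) (Fin m)).symm.toLinearMap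
      (LinearEquiv.ker _)
    exact this
  have hmem : ∀ j, v' j ∈ Submodule.span ℂ (Set.range v) := fun j =>
    mem_span_of_sum_outer v v' key j
  let b := Module.Basis.span hv
  let u : Matrix (Fin n) (Fin n) ℂ := Matrix.of fun j i => b.repr ⟨v' j, hmem j⟩ i
  have hrep : ∀ j, v' j = ∑ i, u j i • v i := by
    intro j
    have h1 := b.sum_repr ⟨v' j, hmem j⟩
    refine (congrArg Subtype.val h1).symm.trans ?_
    simp [u, b, Module.Basis.span_apply]
  let M : Matrix (Fin n) (Fin m × Fin m) ℂ := Matrix.of fun i => v i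
  let M' : Matrix (Fin n) (Fin m × Fin m) ℂ := Matrix.of fun j => v' j
  have hM' : M' = u * M := by
    ext j p
    rw [Matrix.mul_apply]
    have := congrFun (hrep j) p
    simpa [M', M, Finset.sum_apply] using this
  have hGram : M'ᴴ * M' = Mᴴ * M := by
    ext q p
    simp only [Matrix.mul_apply, Matrix.conjTranspose_apply, Matrix.of_apply, M, M']
    simpa [mul_comm] using key p q
  have cancel_right : ∀ D : Matrix (Fin n) (Fin n) ℂ, D * M = 0 → D = 0 := by
    intro D hD
    ext i k
    have h2 : ∑ k, D i k • v k = 0 := by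
      funext p
      have := congrFun (congrFun hD i) p
      simpa [Matrix.mul_apply, M, Finset.sum_apply] using this
    exact Fintype.linearIndependent_iff.1 hv _ h2 k
  have cancel_left : ∀ Y : Matrix (Fin n) (Fin m × Fin m) ℂ, Mᴴ * Y = 0 → Y = 0 := by
    intro Y hY
    ext k c
    have h2 : ∑ k, (starRingEnd ℂ) (Y k c) • v k = 0 := by
      funext q
      have h3 := congrFun (congrFun hY q) c
      simp only [Matrix.mul_apply, Matrix.conjTranspose_apply, Matrix.of_apply,
        Matrix.zero_apply, M] at h3
      have h4 := congrArg (starRingEnd ℂ) h3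
      simpa [map_sum, _root_.map_mul, mul_comm, Finset.sum_apply] using h4
    have := Fintype.linearIndependent_iff.1 hv _ h2 k
    simpa using this
  have h1 : Mᴴ * ((uᴴ * u - 1) * M) = 0 := by
    have h0 : Mᴴ * (uᴴ * u * M) = Mᴴ * M := by
      have h5 : M'ᴴ * M' = Mᴴ * M := hGram
      rw [hM'] at h5
      simp only [Matrix.conjTranspose_mul, Matrix.mul_assoc] at h5
      simp only [Matrix.mul_assoc]
      exact h5
    rw [Matrix.sub_mul, Matrix.one_mul, Matrix.mul_sub, h0, sub_self]
  have hu : uᴴ * u = 1 := by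
    have h2 := cancel_left _ h1
    have h3 := cancel_right _ h2
    exact sub_eq_zero.1 h3
  refine ⟨u, ?_, ?_⟩
  · exact Matrix.mem_unitaryGroup_iff'.2 (by simpa [Matrix.star_eq_conjTranspose] using hu)
  · intro j
    ext a c
    have := congrFun (hrep j) (a, c)
    simpa [v, v', Finset.sum_apply, Matrix.sum_apply] using this
end

section
/- If two families of n×n matrices {C_i} and {D_j} (each with N elements and signs η_k, first p equal +1, last q equal -1) give rise to the same superoperator Σ_k η_k vec(C_k)vec(C_k)† = Σ_k η_k vec(D_k)vec(D_k)†, and the vec(C_k) are linearly independent, then there exists u with u†ηu = η such that vec(D_j) = Σ_i u_{ji} vec(C_i). -/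
open Matrix

/-- The signature matrix `diag(1,…,1,-1,…,-1)` with `p` entries `+1` and `q` entries `-1`. -/
def signatureMatrix (p q : ℕ) : Matrix (Fin (p + q)) (Fin (p + q)) ℂ :=
  Matrix.diagonal (fun k => if (k : ℕ) < p then 1 else -1)

/-- The signs `η_k = +1` for `k ≤ p` and `η_k = -1` for `k > p`. -/
def signs (p q : ℕ) (k : Fin (p + q)) : ℂ := if (k : ℕ) < p then 1 else -1

/-- Vectorization of an `n × n` matrix into `ℂ^(n²)`. -/
def vec {n : ℕ} (M : Matrix (Fin n) (Fin n) ℂ) : Fin n × Fin n → ℂ :=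
  fun p => M p.1 p.2

theorem pseudo_unitary_freedom_of_same_B {n p q : ℕ}
    (C D : Fin (p + q) → Matrix (Fin n) (Fin n) ℂ)
    (hind : LinearIndependent ℂ (fun k => _root_.vec (C k)))
    (hB : ∑ k, signs p q k • vecMulVec (_root_.vec (C k)) (star (_root_.vec (C k)))
        = ∑ k, signs p q k • vecMulVec (_root_.vec (D k)) (star (_root_.vec (D k)))) :
    ∃ u : Matrix (Fin (p + q)) (Fin (p + q)) ℂ,
      uᴴ * signatureMatrix p q * u = signatureMatrix p q ∧
      ∀ j, _root_.vec (D j) = ∑ i, u j i • _root_.vec (C i) := by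
  classical
  set c : Fin (p + q) → (Fin n × Fin n → ℂ) := fun k => _root_.vec (C k) with hc
  set d : Fin (p + q) → (Fin n × Fin n → ℂ) := fun k => _root_.vec (D k) with hdd
  set η : Fin (p + q) → ℂ := signs p q with hηdef
  have hη_ne : ∀ k, η k ≠ 0 := by
    intro k
    simp only [hηdef, signs]
    split <;> norm_num
  -- entrywise form of hB
  have hB' : ∀ a b, (∑ k, η k * (c k a * star (c k b)))
      = ∑ k, η k * (d k a * star (d k b)) := by
    intro a b
    have h := congrFun (congrFun hB a) b
    simpa [Matrix.sum_apply, Matrix.smul_apply, Matrix.vecMulVec_apply, Pi.star_apply,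
      smul_eq_mul] using h
  -- key: apply both sides to a vector x
  have key : ∀ (x : Fin n × Fin n → ℂ) (a : Fin n × Fin n),
      (∑ k, (η k * ∑ b, star (c k b) * x b) * c k a)
      = ∑ k, (η k * ∑ b, star (d k b) * x b) * d k a := by
    have h1 : ∀ (e : Fin (p + q) → (Fin n × Fin n → ℂ)) (x : Fin n × Fin n → ℂ)
        (a : Fin n × Fin n),
        (∑ k, (η k * ∑ b, star (e k b) * x b) * e k a)
        = ∑ b, (∑ k, η k * (e k a * star (e k b))) * x b := by
      intro e x a
      calc (∑ k, (η k * ∑ b, star (e k b) * x b) * e k a)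
          = ∑ k, ∑ b, η k * (e k a * star (e k b)) * x b := by
            refine Finset.sum_congr rfl fun k _ => ?_
            rw [Finset.mul_sum, Finset.sum_mul]
            exact Finset.sum_congr rfl fun b _ => by ring
        _ = ∑ b, ∑ k, η k * (e k a * star (e k b)) * x b := Finset.sum_comm
        _ = ∑ b, (∑ k, η k * (e k a * star (e k b))) * x b := by
            exact Finset.sum_congr rfl fun b _ => (Finset.sum_mul _ _ _).symm
    intro x a
    rw [h1 c x a, h1 d x a]
    exact Finset.sum_congr rfl fun b _ => by rw [hB' a b]
  -- the starred family is linearly independent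
  have hindstar : LinearIndependent ℂ (fun k => star (c k)) := by
    rw [Fintype.linearIndependent_iff] at hind ⊢
    intro g hg k
    have hg' : ∑ i, star (g i) • c i = 0 := by
      have := congrArg star hg
      simpa [star_sum, star_smul] using this
    have := hind (fun i => star (g i)) hg' k
    simpa using congrArg star this
  -- the matrix with rows `star (c k)` has surjective `mulVec`
  set M : Matrix (Fin (p + q)) (Fin n × Fin n) ℂ := Matrix.of fun k => star (c k) with hM
  have hMsurj : Function.Surjective M.mulVec := by
    have hinj : Function.Injective M.vecMulLinear := by
      rw [Matrix.coe_vecMulLinear]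
      exact Matrix.vecMul_injective_iff.mpr hindstar
    have hrankT : Mᵀ.rank = p + q := by
      have hinj' : Function.Injective Mᵀ.mulVecLin := by
        rw [Matrix.coe_mulVecLin]
        intro x y hxy
        apply hinj
        rw [Matrix.coe_vecMulLinear]
        simpa [Matrix.mulVec_transpose] using hxy
      rw [Matrix.rank, LinearMap.finrank_range_of_inj hinj',
        Module.finrank_fintype_fun_eq_card, Fintype.card_fin]
    have hrank : M.rank = p + q := by
      rw [← Matrix.rank_transpose, hrankT]
    have : LinearMap.range M.mulVecLin = ⊤ := by
      apply Submodule.eq_top_of_finrank_eq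
      rw [← Matrix.rank, hrank, Module.finrank_fintype_fun_eq_card, Fintype.card_fin]
    intro y
    obtain ⟨x, hx⟩ := LinearMap.range_eq_top.mp this y
    exact ⟨x, by simpa [Matrix.coe_mulVecLin] using hx⟩
  -- dual vectors
  have hdual : ∀ m, ∃ x : Fin n × Fin n → ℂ,
      ∀ k, (∑ b, star (c k b) * x b) = if k = m then 1 else 0 := by
    intro m
    obtain ⟨x, hx⟩ := hMsurj (Pi.single m 1)
    refine ⟨x, fun k => ?_⟩
    have := congrFun hx k
    simp only [Matrix.mulVec, dotProduct, hM, Matrix.of_apply, Pi.star_apply] at this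
    rw [this, Pi.single_apply]
  choose xd hxd using hdual
  -- evaluating `key` at the dual vectors
  have keym : ∀ m, (η m • c m : Fin n × Fin n → ℂ)
      = ∑ k, (η k * ∑ b, star (d k b) * xd m b) • d k := by
    intro m
    funext a
    have h := key (xd m) a
    have hL : (∑ k, (η k * ∑ b, star (c k b) * xd m b) * c k a) = η m * c m a := by
      rw [Finset.sum_eq_single m]
      · rw [hxd m m]; simp
      · intro k _ hk
        rw [hxd m k]
        simp [hk]
      · simp
    rw [hL] at h
    simpa [Finset.sum_apply, Pi.smul_apply, smul_eq_mul] using h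
  -- each `c m` lies in the span of the `d k`
  have hcd : ∀ m, c m ∈ Submodule.span ℂ (Set.range d) := by
    intro m
    have h1 : (η m • c m : Fin n × Fin n → ℂ) ∈ Submodule.span ℂ (Set.range d) := by
      rw [keym m]
      exact Submodule.sum_mem _ fun k _ =>
        Submodule.smul_mem _ _ (Submodule.subset_span ⟨k, rfl⟩)
    have := Submodule.smul_mem _ (η m)⁻¹ h1
    rwa [smul_smul, inv_mul_cancel₀ (hη_ne m), one_smul] at this
  -- span equality, hence each `d j` lies in the span of the `c i`
  have hle : Submodule.span ℂ (Set.range c) ≤ Submodule.span ℂ (Set.range d) := by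
    rw [Submodule.span_le]
    rintro _ ⟨m, rfl⟩
    exact hcd m
  have heq : Submodule.span ℂ (Set.range c) = Submodule.span ℂ (Set.range d) := by
    apply Submodule.eq_of_le_of_finrank_le hle
    calc Module.finrank ℂ (Submodule.span ℂ (Set.range d)) ≤ Fintype.card (Fin (p + q)) :=
          finrank_range_le_card d
      _ = Module.finrank ℂ (Submodule.span ℂ (Set.range c)) := (finrank_span_eq_card hind).symm
  have hdc : ∀ j, ∃ g : Fin (p + q) → ℂ, ∑ i, g i • c i = d j := by
    intro j
    have : d j ∈ Submodule.span ℂ (Set.range c) := heq ▸ Submodule.subset_span ⟨j, rfl⟩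
    exact (Submodule.mem_span_range_iff_exists_fun ℂ).mp this
  choose u hu using hdc
  -- coefficients are unique
  have hcoef : ∀ f g : Fin (p + q) → ℂ, (∑ l, f l • c l) = ∑ l, g l • c l → ∀ l, f l = g l := by
    intro f g h l
    have h0 : ∑ l, (f l - g l) • c l = 0 := by
      simp only [sub_smul, Finset.sum_sub_distrib, h, sub_self]
    exact sub_eq_zero.mp (Fintype.linearIndependent_iff.mp hind (fun l => f l - g l) h0 l)
  -- the dual pairing computes the coefficients of `d`
  have hw : ∀ m k, (∑ b, star (d k b) * xd m b) = star (u k m) := by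
    intro m k
    have hdk : ∀ b, d k b = ∑ i, u k i * c i b := by
      intro b
      rw [← hu k]
      simp [Finset.sum_apply, Pi.smul_apply, smul_eq_mul]
    calc (∑ b, star (d k b) * xd m b)
        = ∑ b, ∑ i, star (u k i) * (star (c i b) * xd m b) := by
          refine Finset.sum_congr rfl fun b _ => ?_
          rw [hdk b, star_sum, Finset.sum_mul]
          refine Finset.sum_congr rfl fun i _ => ?_
          rw [star_mul']
          ring
      _ = ∑ i, star (u k i) * ∑ b, star (c i b) * xd m b := by
          rw [Finset.sum_comm]
          exact Finset.sum_congr rfl fun i _ => by rw [Finset.mul_sum]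
      _ = star (u k m) := by
          rw [Finset.sum_eq_single m]
          · rw [hxd m m]; simp
          · intro i _ hi
            rw [hxd m i]; simp [hi]
          · simp
  -- the main coefficient identity
  have hmain : ∀ m l, (∑ k, η k * star (u k m) * u k l) = if l = m then η m else 0 := by
    intro m l
    refine (hcoef (fun l => ∑ k, η k * star (u k m) * u k l)
      (fun l => if l = m then η m else 0) ?_ l)
    have hR : (∑ k, (η k * ∑ b, star (d k b) * xd m b) • d k)
        = ∑ l, (∑ k, η k * star (u k m) * u k l) • c l := by
      calc (∑ k, (η k * ∑ b, star (d k b) * xd m b) • d k)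
          = ∑ k, ∑ l, (η k * star (u k m) * u k l) • c l := by
            refine Finset.sum_congr rfl fun k _ => ?_
            rw [hw m k, ← hu k, Finset.smul_sum]
            refine Finset.sum_congr rfl fun l _ => ?_
            rw [smul_smul]
        _ = ∑ l, ∑ k, (η k * star (u k m) * u k l) • c l := Finset.sum_comm
        _ = ∑ l, (∑ k, η k * star (u k m) * u k l) • c l := by
            exact Finset.sum_congr rfl fun l _ => (Finset.sum_smul).symm
    have hL : (η m • c m : Fin n × Fin n → ℂ)
        = ∑ l, (if l = m then η m else 0) • c l := by
      symm
      calc (∑ l, (if l = m then η m else 0) • c l)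
          = ∑ l, (if l = m then η m • c l else 0) := by
            refine Finset.sum_congr rfl fun l _ => ?_
            split <;> simp
        _ = η m • c m := by simp
    rw [← hR, ← hL]
    exact (keym m).symm
  -- conclude
  refine ⟨Matrix.of u, ?_, fun j => by simpa [hc, hdd] using (hu j).symm⟩
  ext m l
  have hEntry : ((Matrix.of u)ᴴ * signatureMatrix p q * Matrix.of u) m l
      = ∑ k, η k * star (u k m) * u k l := by
    rw [Matrix.mul_assoc, Matrix.mul_apply]
    refine Finset.sum_congr rfl fun k _ => ?_
    rw [Matrix.conjTranspose_apply, signatureMatrix, Matrix.diagonal_mul, Matrix.of_apply,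
      Matrix.of_apply]
    have hk : (if (k : ℕ) < p then (1 : ℂ) else -1) = η k := by
      simp [hηdef, signs]
    rw [hk]
    ring
  rw [hEntry, hmain m l, signatureMatrix, Matrix.diagonal_apply]
  by_cases h : m = l
  · subst h
    simp [hηdef, signs]
  · simp [h, Ne.symm h]
end
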